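/- If G' is a finite-index subgroup of a group G, then G satisfies ωACC (every ascending chain of subgroups of uniformly bounded rank stabilizes) if and only if G' satisfies ωACC. -/

import Mathlib

/-- `RankLE H r`: the subgroup `H` is generated by at most `r` elements. -/
def RankLE {G : Type*} [Group G] (H : Subgroup G) (r : ℕ) : Prop :=
  ∃ S : Finset G, (S : Set G) ⊆ (H : Set G) ∧ Subgroup.closure (S : Set G) = H ∧ S.card ≤ r

/-- A group satisfies ωACC if every ascending chain of subgroups of uniformly
bounded rank is eventually constant. -/
def OmegaACC (G : Type*) [Group G] : Prop :=
  ∀ r : ℕ, ∀ H : ℕ → Subgroup G, Monotone H → (∀ n, RankLE (H n) r) →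
    ∃ N, ∀ n, N ≤ n → H n = H N

/-- A subgroup of rank at most `r` intersected with a finite index subgroup has rank at
most `G'.index * r` (as a subgroup of `G'`), by Schreier's lemma. -/
lemma rankLE_subgroupOf_of_rankLE {G : Type*} [Group G] (G' : Subgroup G)
    [G'.FiniteIndex] {H : Subgroup G} {r : ℕ} (h : RankLE H r) :
    RankLE (H.subgroupOf G') (G'.index * r) := by
  classical
  obtain ⟨S, hS1, hS2, hS3⟩ := h
  subst hS2
  set H := Subgroup.closure (S : Set G) with hH
  -- `H` is finitely generated of rank at most `r`
  haveI : Group.FG H := Group.closure_finset_fg S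
  have hrankH : Group.rank H ≤ r := by
    refine le_trans (Group.rank_le (G := H)
      (S := S.preimage Subtype.val Subtype.coe_injective.injOn) ?_) ?_
    · rw [Finset.coe_preimage, ← Subgroup.coe_subtype, Subgroup.closure_preimage_eq_top]
    · exact le_trans (Finset.card_le_card_of_injOn Subtype.val
        (fun x hx => Finset.mem_preimage.mp hx) Subtype.coe_injective.injOn) hS3
  -- the index of `G'.subgroupOf H` is at most `G'.index`
  have hidx : (G'.subgroupOf H).index ≤ G'.index := by
    have h0 : G'.relIndex ⊤ ≠ 0 := by
      rw [Subgroup.relIndex_top_right]; exact Subgroup.FiniteIndex.index_ne_zero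
    have := Subgroup.relIndex_le_of_le_right (H := G') (K := H) le_top h0
    rwa [Subgroup.relIndex_top_right] at this
  -- Schreier
  have hrank : Group.rank (G'.subgroupOf H) ≤ G'.index * r := by
    refine le_trans (Subgroup.rank_le_index_mul_rank (G'.subgroupOf H)) ?_
    exact Nat.mul_le_mul hidx hrankH
  obtain ⟨T, hT1, hT2⟩ := Group.rank_spec (G'.subgroupOf H)
  -- the natural map from `G'.subgroupOf H` to `G'`
  let f : (G'.subgroupOf H) →* G' :=
    { toFun := fun x => ⟨(x : H), x.2⟩
      map_one' := rfl
      map_mul' := fun _ _ => rfl }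
  have hfrange : f.range = H.subgroupOf G' := by
    ext x
    constructor
    · rintro ⟨y, rfl⟩
      exact Subgroup.mem_subgroupOf.mpr (y : H).2
    · intro hx
      exact ⟨⟨⟨(x : G), Subgroup.mem_subgroupOf.mp hx⟩, x.2⟩, rfl⟩
  have hclo : Subgroup.closure ((T.image f : Finset G') : Set G') = H.subgroupOf G' := by
    rw [Finset.coe_image, ← MonoidHom.map_closure, hT2, ← MonoidHom.range_eq_map, hfrange]
  exact ⟨T.image f, hclo ▸ Subgroup.subset_closure, hclo,
    le_trans Finset.card_image_le (hT1 ▸ hrank)⟩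

/-- If `G'` is a finite-index subgroup of `G`, then `G` satisfies ωACC iff `G'` does. -/
theorem finiteIndex_omegaACC_iff {G : Type*} [Group G] (G' : Subgroup G)
    [G'.FiniteIndex] : OmegaACC G ↔ OmegaACC G' := by
  constructor
  · -- subgroups of `G'` are subgroups of `G`
    intro hG r K hmono hrank
    classical
    have hr : ∀ n, RankLE ((K n).map G'.subtype) r := by
      intro n
      obtain ⟨S, hS1, hS2, hS3⟩ := hrank n
      have hclo : Subgroup.closure ((S.image G'.subtype : Finset G) : Set G)
          = (K n).map G'.subtype := by
        rw [Finset.coe_image, ← MonoidHom.map_closure, hS2]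
      exact ⟨S.image G'.subtype, hclo ▸ Subgroup.subset_closure, hclo,
        le_trans Finset.card_image_le hS3⟩
    obtain ⟨N, hN⟩ := hG r (fun n => (K n).map G'.subtype)
      (fun a b hab => Subgroup.map_mono (hmono hab)) hr
    exact ⟨N, fun n hn => Subgroup.map_injective G'.subtype_injective (hN n hn)⟩
  · intro hG' r H hmono hrank
    -- the chain of intersections with `G'` stabilizes
    obtain ⟨N₁, hN₁⟩ := hG' (G'.index * r) (fun n => (H n).subgroupOf G')
      (fun a b hab => Subgroup.comap_mono (hmono hab))
      (fun n => rankLE_subgroupOf_of_rankLE G' (hrank n))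
    -- the chain of coset images in the finite quotient `G ⧸ G'` stabilizes
    have hcos : ∀ a b : ℕ, a ≤ b →
        ((QuotientGroup.mk '' (H a : Set G)) : Set (G ⧸ G')) ⊆ QuotientGroup.mk '' (H b : Set G) :=
      fun a b hab => Set.image_mono (hmono hab)
    obtain ⟨N₂, hN₂⟩ := wellFoundedGT_iff_monotone_chain_condition.mp
      (Finite.to_wellFoundedGT (α := Set (G ⧸ G')))
      ⟨fun n => (QuotientGroup.mk '' (H n : Set G) : Set (G ⧸ G')), fun a b hab => hcos a b hab⟩
    refine ⟨max N₁ N₂, fun n hn => le_antisymm ?_ (hmono hn)⟩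
    intro h hh
    -- find an element of `H (max N₁ N₂)` in the same `G'`-coset as `h`
    have hq : (QuotientGroup.mk h : G ⧸ G') ∈
        QuotientGroup.mk '' ((H (max N₁ N₂) : Subgroup G) : Set G) := by
      have e1 := hN₂ n (le_trans (le_max_right _ _) hn)
      have e2 := hN₂ (max N₁ N₂) (le_max_right _ _)
      have : (QuotientGroup.mk '' (H n : Set G) : Set (G ⧸ G'))
          = QuotientGroup.mk '' (H (max N₁ N₂) : Set G) := by
        exact e1.symm.trans e2
      exact this ▸ ⟨h, hh, rfl⟩
    obtain ⟨h', hh', hq'⟩ := hq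
    have hG'mem : h'⁻¹ * h ∈ G' := QuotientGroup.eq.mp hq'
    have hHn : h'⁻¹ * h ∈ H n := mul_mem (inv_mem (hmono hn hh')) hh
    -- use stabilization of the intersection chain
    have hK : (H n).subgroupOf G' = (H (max N₁ N₂)).subgroupOf G' := by
      have e1 := hN₁ n (le_trans (le_max_left _ _) hn)
      have e2 := hN₁ (max N₁ N₂) (le_max_left _ _)
      exact e1.trans e2.symm
    have : (⟨h'⁻¹ * h, hG'mem⟩ : G') ∈ (H n).subgroupOf G' :=
      Subgroup.mem_subgroupOf.mpr hHn
    rw [hK] at this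
    have hmem : h'⁻¹ * h ∈ H (max N₁ N₂) := Subgroup.mem_subgroupOf.mp this
    have : h' * (h'⁻¹ * h) ∈ H (max N₁ N₂) := mul_mem hh' hmem
    simpa using this
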